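/- Suppose A : [0,∞) → ℝ^{n×n} is continuous and there exist η > 0 with μ(A^{[k]}(t)) ≤ −η for all t ≥ 0, where μ is a matrix measure. Then the transition matrix Φ(t) of ẋ = A(t)x satisfies ||Φ^{(k)}(t)|| ≤ exp(−ηt) for all t ≥ 0. -/

import Mathlib

open Matrix

/-- The `k`-multiplicative compound of a matrix: the matrix of all `k × k` minors,
indexed by the `k`-element subsets of the row and column index sets (ordered
increasingly / lexicographically). -/
noncomputable def mulCompound {𝕜 : Type*} [CommRing 𝕜] {n m : ℕ}
    (A : Matrix (Fin n) (Fin m) 𝕜) (k : ℕ) :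
    Matrix {s : Finset (Fin n) // s.card = k} {t : Finset (Fin m) // t.card = k} 𝕜 :=
  fun α β => (A.submatrix (α.1.orderEmbOfFin α.2) (β.1.orderEmbOfFin β.2)).det

/-- The `k`-additive compound: `A^{[k]} := (d/dε) (I + ε A)^{(k)} |_{ε = 0}`. -/
noncomputable def addCompound {𝕜 : Type*} [NontriviallyNormedField 𝕜] {n : ℕ}
    (A : Matrix (Fin n) (Fin n) 𝕜) (k : ℕ) :
    Matrix {s : Finset (Fin n) // s.card = k} {s : Finset (Fin n) // s.card = k} 𝕜 :=
  fun α β => deriv (fun ε : 𝕜 => mulCompound (1 + ε • A) k α β) 0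

section CauchyBinet

open Equiv Equiv.Perm Finset Function

variable {R : Type*} [CommRing R] {k n : ℕ}


local notation "ε " σ:arg => ((Equiv.Perm.sign σ : ℤ) : R)

theorem cb_aux {M : Matrix (Fin k) (Fin n) R} {N : Matrix (Fin n) (Fin k) R} {p : Fin k → Fin n}
    (H : ¬Function.Injective p) :
    (∑ σ : Perm (Fin k), ε σ * ∏ x, M (σ x) (p x) * N (p x) x) = 0 := by
  obtain ⟨i, j, hpij, hij⟩ : ∃ i j, p i = p j ∧ i ≠ j := by
    rw [Function.Injective] at H
    push_neg at H
    obtain ⟨i, j, h1, h2⟩ := H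
    exact ⟨i, j, h1, h2⟩
  exact
    sum_involution (fun σ _ => σ * Equiv.swap i j)
      (fun σ _ => by
        have : (∏ x, M (σ x) (p x)) = ∏ x, M ((σ * Equiv.swap i j) x) (p x) :=
          Fintype.prod_equiv (swap i j) _ _ (by simp [apply_swap_eq_self hpij])
        simp [this, sign_swap hij, -sign_swap', prod_mul_distrib])
      (fun σ _ _ => (not_congr mul_swap_eq_iff).mpr hij) (fun _ _ => mem_univ _) fun σ _ =>
      mul_swap_involutive i j σ

theorem sum_perm_det (M N : Matrix (Fin k) (Fin k) R) :
    ∑ τ : Perm (Fin k), ∑ σ : Perm (Fin k), ε σ * ∏ i, M (σ i) (τ i) * N (τ i) i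
      = M.det * N.det :=
  calc
    ∑ τ : Perm (Fin k), ∑ σ : Perm (Fin k), ε σ * ∏ i, M (σ i) (τ i) * N (τ i) i
    _ = ∑ σ : Perm (Fin k), ∑ τ : Perm (Fin k),
          (∏ i, N (σ i) i) * ε τ * ∏ j, M (τ j) (σ j) := by
      simp only [mul_comm, mul_left_comm, prod_mul_distrib, mul_assoc]
    _ = ∑ σ : Perm (Fin k), ∑ τ : Perm (Fin k),
          (∏ i, N (σ i) i) * (ε σ * ε τ) * ∏ i, M (τ i) i :=
      (sum_congr rfl fun σ _ =>
        Fintype.sum_equiv (Equiv.mulRight σ⁻¹) _ _ fun τ => by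
          have : (∏ j, M (τ j) (σ j)) = ∏ j, M ((τ * σ⁻¹) j) j := by
            rw [← (σ⁻¹ : _ ≃ _).prod_comp]
            simp only [Equiv.Perm.coe_mul, Equiv.Perm.coe_inv, Equiv.apply_symm_apply, Function.comp_apply]
          have h : ε σ * ε (τ * σ⁻¹) = ε τ :=
            calc
              ε σ * ε (τ * σ⁻¹) = ε (τ * σ⁻¹ * σ) := by
                rw [mul_comm, sign_mul (τ * σ⁻¹)]
                simp only [Int.cast_mul, Units.val_mul]
              _ = ε τ := by simp only [inv_mul_cancel_right]
          simp_rw [Equiv.coe_mulRight, h]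
          simp only [this])
    _ = M.det * N.det := by
      simp only [det_apply', Finset.mul_sum, mul_comm, mul_left_comm, mul_assoc]

theorem cauchy_binet (P : Matrix (Fin k) (Fin n) R) (Q : Matrix (Fin n) (Fin k) R) :
    (P * Q).det = ∑ γ : {s : Finset (Fin n) // s.card = k},
      (P.submatrix id (γ.1.orderEmbOfFin γ.2)).det * (Q.submatrix (γ.1.orderEmbOfFin γ.2) id).det := by
  have step1 : (P * Q).det
      = ∑ p : Fin k → Fin n, ∑ σ : Perm (Fin k), ε σ * ∏ i, P (σ i) (p i) * Q (p i) i := by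
    simp only [det_apply', Matrix.mul_apply, prod_univ_sum, mul_sum, Fintype.piFinset_univ]
    rw [Finset.sum_comm]
  have step2 : (P * Q).det
      = ∑ p ∈ univ.filter (fun p : Fin k → Fin n => Function.Injective p),
          ∑ σ : Perm (Fin k), ε σ * ∏ i, P (σ i) (p i) * Q (p i) i := by
    rw [step1]
    refine (sum_subset (filter_subset _ _) fun f _ hbij => cb_aux ?_).symm
    simpa only [true_and, mem_filter, mem_univ] using hbij
  have step3 : (P * Q).det
      = ∑ x : {s : Finset (Fin n) // s.card = k} × Perm (Fin k),
          ∑ σ : Perm (Fin k), ε σ * ∏ i,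
            P (σ i) (x.1.1.orderEmbOfFin x.1.2 (x.2 i)) * Q (x.1.1.orderEmbOfFin x.1.2 (x.2 i)) i := by
    rw [step2]
    refine (Finset.sum_bij (fun x _ => fun i => x.1.1.orderEmbOfFin x.1.2 (x.2 i)) ?_ ?_ ?_ ?_).symm
    · intro x _
      simp only [mem_filter, mem_univ, true_and]
      exact (x.1.1.orderEmbOfFin x.1.2).injective.comp x.2.injective
    · intro x _ y _ hxy
      have hx : ∀ γ : {s : Finset (Fin n) // s.card = k} × Perm (Fin k),
          univ.image (fun i => γ.1.1.orderEmbOfFin γ.1.2 (γ.2 i)) = γ.1.1 := by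
        intro γ
        have hinj : Function.Injective (fun i => γ.1.1.orderEmbOfFin γ.1.2 (γ.2 i)) :=
          fun a b hab => γ.2.injective ((γ.1.1.orderEmbOfFin γ.1.2).injective hab)
        apply Finset.eq_of_subset_of_card_le
        · intro b hb
          simp only [mem_image, mem_univ, true_and] at hb
          obtain ⟨i, rfl⟩ := hb
          exact Finset.orderEmbOfFin_mem _ _ _
        · rw [Finset.card_image_of_injective _ hinj, card_univ, Fintype.card_fin, γ.1.2]
      have himg : x.1.1 = y.1.1 := by rw [← hx x, ← hx y, hxy]
      obtain ⟨⟨s, hs⟩, τ⟩ := x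
      obtain ⟨⟨s', hs'⟩, τ'⟩ := y
      obtain rfl : s = s' := himg
      have : τ = τ' := by
        ext i
        have h := congrFun hxy i
        exact congrArg Fin.val ((s.orderEmbOfFin hs).injective h)
      rw [this]
    · intro f hf
      simp only [mem_filter, mem_univ, true_and] at hf
      set s : Finset (Fin n) := univ.image f with hsdef
      have hs : s.card = k := by
        rw [hsdef, Finset.card_image_of_injective _ hf, card_univ, Fintype.card_fin]
      have hmem : ∀ i, f i ∈ s := fun i => mem_image.2 ⟨i, mem_univ i, rfl⟩
      have hbij : Function.Bijective (fun i => (⟨f i, hmem i⟩ : {x // x ∈ s})) := by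
        rw [Fintype.bijective_iff_injective_and_card]
        constructor
        · intro a b hab
          exact hf (Subtype.ext_iff.1 hab)
        · rw [Fintype.card_coe, hs, Fintype.card_fin]
      refine ⟨⟨⟨s, hs⟩, (Equiv.ofBijective _ hbij).trans (s.orderIsoOfFin hs).toEquiv.symm⟩,
        mem_univ _, ?_⟩
      funext i
      show s.orderEmbOfFin hs ((s.orderIsoOfFin hs).toEquiv.symm (Equiv.ofBijective _ hbij i)) = f i
      have h1 : ((s.orderIsoOfFin hs).toEquiv.symm (Equiv.ofBijective _ hbij i))
          = (s.orderIsoOfFin hs).symm ⟨f i, hmem i⟩ := rfl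
      rw [h1, ← Finset.coe_orderIsoOfFin_apply, OrderIso.apply_symm_apply]
    · intro x _
      rfl
  rw [step3, Fintype.sum_prod_type]
  refine Finset.sum_congr rfl fun γ _ => ?_
  rw [← sum_perm_det (P.submatrix id (γ.1.orderEmbOfFin γ.2)) (Q.submatrix (γ.1.orderEmbOfFin γ.2) id)]
  rfl

end CauchyBinet

theorem mulCompound_mul {R : Type*} [CommRing R] {n k : ℕ} (X Y : Matrix (Fin n) (Fin n) R) :
    mulCompound (X * Y) k = mulCompound X k * mulCompound Y k := by
  ext α β
  rw [Matrix.mul_apply]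
  show ((X * Y).submatrix _ _).det = _
  rw [Matrix.submatrix_mul X Y _ id _ Function.bijective_id, cauchy_binet]
  refine Finset.sum_congr rfl fun γ _ => ?_
  rw [Matrix.submatrix_submatrix, Matrix.submatrix_submatrix]
  rfl

theorem mulCompound_one {R : Type*} [CommRing R] {n k : ℕ} :
    mulCompound (1 : Matrix (Fin n) (Fin n) R) k = 1 := by
  ext α β
  by_cases h : α = β
  · subst h
    have h1 : ((1 : Matrix (Fin n) (Fin n) R).submatrix (α.1.orderEmbOfFin α.2)
        (α.1.orderEmbOfFin α.2)) = 1 := by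
      ext i j
      simp [Matrix.submatrix_apply, Matrix.one_apply, (α.1.orderEmbOfFin α.2).injective.eq_iff]
    show ((1 : Matrix (Fin n) (Fin n) R).submatrix _ _).det = _
    rw [h1, Matrix.det_one, Matrix.one_apply_eq]
  · obtain ⟨b, hbβ, hbα⟩ : ∃ b ∈ β.1, b ∉ α.1 := by
      by_contra h'
      push_neg at h'
      exact h (Subtype.ext (Finset.eq_of_subset_of_card_le h' (by rw [α.2, β.2])).symm)
    have hj : ∃ j, β.1.orderEmbOfFin β.2 j = b := by
      have : b ∈ Set.range (β.1.orderEmbOfFin β.2) := by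
        rw [Finset.range_orderEmbOfFin]; exact hbβ
      exact this
    obtain ⟨j, hjb⟩ := hj
    show ((1 : Matrix (Fin n) (Fin n) R).submatrix _ _).det = _
    rw [Matrix.det_eq_zero_of_column_eq_zero j, (Matrix.one_apply_ne h : (1 : Matrix _ _ R) α β = 0)]
    intro i
    simp only [Matrix.submatrix_apply]
    rw [Matrix.one_apply_ne]
    intro heq
    apply hbα
    rw [← hjb, ← heq]
    exact Finset.orderEmbOfFin_mem α.1 α.2 i

theorem diff_fin_prod {ι' : Type*} [DecidableEq ι'] (u : Finset ι') {E : Type*}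
    [NormedAddCommGroup E] [NormedSpace ℝ E] (f : ι' → E → ℝ)
    (h : ∀ i ∈ u, Differentiable ℝ (f i)) :
    Differentiable ℝ (fun x => ∏ i ∈ u, f i x) := by
  induction u using Finset.induction with
  | empty => simpa using differentiable_const (1:ℝ)
  | insert a s hni ih =>
    simp only [Finset.prod_insert hni]
    exact (h a (Finset.mem_insert_self a s)).mul
      (ih fun i hi => h i (Finset.mem_insert_of_mem hi))

theorem differentiable_minor {n k : ℕ} (α β : {s : Finset (Fin n) // s.card = k}) :
    Differentiable ℝ (fun X : Fin n → Fin n → ℝ => mulCompound (Matrix.of X) k α β) := by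
  have heq : (fun X : Fin n → Fin n → ℝ => mulCompound (Matrix.of X) k α β)
      = fun X => ∑ σ : Equiv.Perm (Fin k), ((Equiv.Perm.sign σ : ℤ) : ℝ)
          * ∏ i, X (α.1.orderEmbOfFin α.2 (σ i)) (β.1.orderEmbOfFin β.2 i) := by
    funext X
    exact Matrix.det_apply' _
  rw [heq]
  apply Differentiable.fun_sum
  intro σ _
  apply Differentiable.const_mul
  apply diff_fin_prod
  intro i _
  exact ((ContinuousLinearMap.proj (R := ℝ) (φ := fun _ : Fin n => ℝ)
      (β.1.orderEmbOfFin β.2 i)).comp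
    (ContinuousLinearMap.proj (R := ℝ) (φ := fun _ : Fin n => Fin n → ℝ)
      (α.1.orderEmbOfFin α.2 (σ i)))).differentiable

theorem key_deriv {n k : ℕ} (t : ℝ) (B X : Matrix (Fin n) (Fin n) ℝ)
    (Φ : ℝ → Matrix (Fin n) (Fin n) ℝ)
    (hd : ∀ i j, HasDerivAt (fun s => Φ s i j) ((B * X) i j) t)
    (hval : Φ t = X) (α β : {s : Finset (Fin n) // s.card = k}) :
    HasDerivAt (fun s => mulCompound (Φ s) k α β)
      ((addCompound B k * mulCompound X k) α β) t := by
  set F : (Fin n → Fin n → ℝ) → ℝ := fun Y => mulCompound (Matrix.of Y) k α β with hF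
  set M' : Fin n → Fin n → ℝ := fun i j => (B * X) i j with hM'
  have hc : HasDerivAt (fun s => (fun i j => Φ s i j)) M' t :=
    hasDerivAt_pi.2 fun i => hasDerivAt_pi.2 fun j => hd i j
  have hFd := (differentiable_minor α β).differentiableAt (x := (fun i j => X i j))
  set L := fderiv ℝ F (fun i j => X i j) with hL
  have hFd' : HasFDerivAt F L (fun i j => Φ t i j) := by
    rw [hval]; exact hFd.hasFDerivAt
  have h1 : HasDerivAt (fun s => F (Φ s)) (L M') t := hFd'.comp_hasDerivAt (f := fun s i j => Φ s i j) t hc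
  -- second curve
  set c2 : ℝ → Fin n → Fin n → ℝ := fun s i j => X i j + (s - t) * M' i j with hc2def
  have hc2 : HasDerivAt c2 M' t := by
    apply hasDerivAt_pi.2; intro i; apply hasDerivAt_pi.2; intro j
    simpa [hc2def] using (((hasDerivAt_id t).sub_const t).mul_const (M' i j)).const_add (X i j)
  have hc2t : c2 t = (fun i j => X i j) := by
    funext i j; simp [hc2def]
  have hFd'' : HasFDerivAt F L (c2 t) := by rw [hc2t]; exact hFd.hasFDerivAt
  have h2 : HasDerivAt (fun s => F (c2 s)) (L M') t := hFd''.comp_hasDerivAt t hc2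
  have heq2 : (fun s => F (c2 s))
      = fun s => ∑ γ : {s : Finset (Fin n) // s.card = k},
          mulCompound (1 + (s - t) • B) k α γ * mulCompound X k γ β := by
    funext s
    have hmat : (Matrix.of (c2 s)) = (1 + (s - t) • B) * X := by
      ext i j
      simp [hc2def, hM', Matrix.add_mul, Matrix.smul_mul, Matrix.add_apply, Matrix.smul_apply]
    show mulCompound (Matrix.of (c2 s)) k α β = _
    rw [hmat, mulCompound_mul, Matrix.mul_apply]
  have hterm : ∀ γ : {s : Finset (Fin n) // s.card = k},
      HasDerivAt (fun s => mulCompound (1 + (s - t) • B) k α γ) (addCompound B k α γ) t := by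
    intro γ
    have hpath : HasDerivAt (fun ε : ℝ => (fun i j => (1 + ε • B : Matrix (Fin n) (Fin n) ℝ) i j))
        (fun i j => B i j) 0 := by
      apply hasDerivAt_pi.2; intro i; apply hasDerivAt_pi.2; intro j
      have : (fun ε : ℝ => (1 + ε • B : Matrix (Fin n) (Fin n) ℝ) i j)
          = fun ε : ℝ => (1 : Matrix (Fin n) (Fin n) ℝ) i j + ε * B i j := by
        funext ε; simp [Matrix.add_apply, Matrix.smul_apply]
      rw [this]
      simpa using ((hasDerivAt_id (0:ℝ)).mul_const (B i j)).const_add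
        ((1 : Matrix (Fin n) (Fin n) ℝ) i j)
    have hdiff1 := (differentiable_minor (n := n) (k := k) α γ).differentiableAt
      (x := (fun i j => (1 : Matrix (Fin n) (Fin n) ℝ) i j))
    have hpt : (fun i j => (1 + (0:ℝ) • B : Matrix (Fin n) (Fin n) ℝ) i j)
        = (fun i j => (1 : Matrix (Fin n) (Fin n) ℝ) i j) := by
      funext i j; simp
    have hFd1 : HasFDerivAt (fun Y : Fin n → Fin n → ℝ => mulCompound (Matrix.of Y) k α γ)
        (fderiv ℝ (fun Y : Fin n → Fin n → ℝ => mulCompound (Matrix.of Y) k α γ)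
          (fun i j => (1 : Matrix (Fin n) (Fin n) ℝ) i j))
        ((fun ε : ℝ => (fun i j => (1 + ε • B : Matrix (Fin n) (Fin n) ℝ) i j)) 0) := by
      show HasFDerivAt _ _ (fun i j => (1 + (0:ℝ) • B : Matrix (Fin n) (Fin n) ℝ) i j)
      rw [hpt]
      exact hdiff1.hasFDerivAt
    have hgd : HasDerivAt (fun ε : ℝ => mulCompound (1 + ε • B) k α γ)
        (fderiv ℝ (fun Y : Fin n → Fin n → ℝ => mulCompound (Matrix.of Y) k α γ)
          (fun i j => (1 : Matrix (Fin n) (Fin n) ℝ) i j) (fun i j => B i j)) 0 :=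
      hFd1.comp_hasDerivAt (f := fun ε : ℝ => (fun i j => (1 + ε • B : Matrix (Fin n) (Fin n) ℝ) i j)) 0 hpath
    have haddc : addCompound B k α γ
        = fderiv ℝ (fun Y : Fin n → Fin n → ℝ => mulCompound (Matrix.of Y) k α γ)
          (fun i j => (1 : Matrix (Fin n) (Fin n) ℝ) i j) (fun i j => B i j) := by
      have := hgd.deriv
      exact this ▸ rfl
    rw [haddc]
    have hgd' : HasDerivAt (fun ε : ℝ => mulCompound (1 + ε • B) k α γ)
        (fderiv ℝ (fun Y : Fin n → Fin n → ℝ => mulCompound (Matrix.of Y) k α γ)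
          (fun i j => (1 : Matrix (Fin n) (Fin n) ℝ) i j) (fun i j => B i j))
        (t - t) := by
      rw [sub_self]
      exact hgd
    exact hgd'.comp_sub_const t t
  have h3 : HasDerivAt (fun s => ∑ γ : {s : Finset (Fin n) // s.card = k},
        mulCompound (1 + (s - t) • B) k α γ * mulCompound X k γ β)
      (∑ γ : {s : Finset (Fin n) // s.card = k},
        addCompound B k α γ * mulCompound X k γ β) t :=
    HasDerivAt.fun_sum fun γ _ => (hterm γ).mul_const _
  rw [heq2] at h2
  have hLeq : L M' = ∑ γ : {s : Finset (Fin n) // s.card = k},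
      addCompound B k α γ * mulCompound X k γ β := h2.unique h3
  have hgoal : (addCompound B k * mulCompound X k) α β
      = L M' := by rw [Matrix.mul_apply, hLeq]
  rw [hgoal]
  exact h1

open Filter in
/-- Coppel: if `μ(A^{[k]}(t)) ≤ -η < 0` for all `t ≥ 0`, where `μ` is the matrix measure
induced by (the operator norm of) a vector norm `v`, then the transition matrix satisfies
`‖Φ^{(k)}(t)‖ ≤ exp(-η t)` for all `t ≥ 0`. -/
theorem coppel_k_contracting {n : ℕ} (k : ℕ) (hk1 : 1 ≤ k) (hk : k ≤ n)
    (A Φ : ℝ → Matrix (Fin n) (Fin n) ℝ)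
    (hA : ∀ i j, Continuous (fun t => A t i j))
    (hΦ : ∀ t, 0 ≤ t → ∀ i j, HasDerivAt (fun s => Φ s i j) ((A t * Φ t) i j) t)
    (hΦ0 : Φ 0 = 1)
    -- a vector norm `v` on the compound space
    (v : ({s : Finset (Fin n) // s.card = k} → ℝ) → ℝ)
    (hv0 : ∀ x, 0 ≤ v x) (hveq : ∀ x, v x = 0 ↔ x = 0)
    (hvsmul : ∀ (c : ℝ) x, v (c • x) = |c| * v x)
    (hvadd : ∀ x y, v (x + y) ≤ v x + v y)
    -- the induced matrix norm
    (N : Matrix {s : Finset (Fin n) // s.card = k} {s : Finset (Fin n) // s.card = k} ℝ → ℝ)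
    (hN : ∀ B, N B = sSup (Set.image (fun x => v (B.mulVec x)) {x | v x = 1}))
    -- the induced matrix measure `μ(B) = lim_{ε↓0} (‖I + εB‖ - 1)/ε`
    (μ : Matrix {s : Finset (Fin n) // s.card = k} {s : Finset (Fin n) // s.card = k} ℝ → ℝ)
    (hμ : ∀ B, Tendsto (fun ε : ℝ => (N (1 + ε • B) - 1) / ε) (nhdsWithin 0 (Set.Ioi 0))
        (nhds (μ B)))
    (η : ℝ) (hη : 0 < η)
    (hcontr : ∀ t, 0 ≤ t → μ (addCompound (A t) k) ≤ -η) :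
    ∀ t, 0 ≤ t → N (mulCompound (Φ t) k) ≤ Real.exp (-η * t) := by
  classical
  have hι : Nonempty {s : Finset (Fin n) // s.card = k} := by
    obtain ⟨s, -, hs⟩ := Finset.exists_subset_card_eq
      (show k ≤ (Finset.univ : Finset (Fin n)).card by simpa using hk)
    exact ⟨⟨s, hs⟩⟩
  obtain ⟨i₀⟩ := hι
  have hv00 : v 0 = 0 := (hveq 0).2 rfl
  have hvneg : ∀ a b : {s : Finset (Fin n) // s.card = k} → ℝ, v (a - b) = v (b - a) := by
    intro a b
    have h := hvsmul (-1) (b - a)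
    rw [neg_one_smul, neg_sub] at h
    simpa using h
  have hvsum : ∀ x : {s : Finset (Fin n) // s.card = k} → ℝ,
      v x ≤ ∑ i, |x i| * v (Pi.single i 1) := by
    intro x
    have hx : x = ∑ j, x j • (Pi.single j (1:ℝ) : {s : Finset (Fin n) // s.card = k} → ℝ) := by
      funext i
      rw [Finset.sum_apply]
      have h1 : ∀ j, (x j • (Pi.single j (1:ℝ) : {s : Finset (Fin n) // s.card = k} → ℝ)) i
          = (Pi.single j (x j) : {s : Finset (Fin n) // s.card = k} → ℝ) i := by
        intro j
        by_cases h : i = j <;> simp [Pi.single_apply, h]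
      simp_rw [h1]
      exact (Fintype.sum_pi_single i x).symm
    calc v x = v (∑ j, x j • (Pi.single j (1:ℝ) : {s : Finset (Fin n) // s.card = k} → ℝ)) := by
          rw [← hx]
    _ ≤ ∑ j, v (x j • (Pi.single j (1:ℝ) : {s : Finset (Fin n) // s.card = k} → ℝ)) :=
          Finset.le_sum_of_subadditive v hv00.le hvadd _ _
    _ = ∑ j, |x j| * v (Pi.single j 1) := by simp_rw [hvsmul]
  have hvcont : Continuous v := by
    rw [continuous_iff_continuousAt]
    intro x₀
    rw [ContinuousAt, tendsto_iff_dist_tendsto_zero]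
    have hb : ∀ x : {s : Finset (Fin n) // s.card = k} → ℝ,
        dist (v x) (v x₀) ≤ ∑ i, |x i - x₀ i| * v (Pi.single i 1) := by
      intro x
      rw [Real.dist_eq]
      have h1 : v x - v x₀ ≤ v (x - x₀) := by
        have h := hvadd (x - x₀) x₀
        rw [sub_add_cancel] at h
        linarith
      have h2 : v x₀ - v x ≤ v (x - x₀) := by
        have h := hvadd (x₀ - x) x
        rw [sub_add_cancel, hvneg] at h
        linarith
      have h3 : v (x - x₀) ≤ ∑ i, |x i - x₀ i| * v (Pi.single i 1) := by
        simpa using hvsum (x - x₀)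
      rw [abs_le]
      constructor <;> linarith
    apply squeeze_zero (fun _ => dist_nonneg) hb
    have hgc : Continuous (fun x : {s : Finset (Fin n) // s.card = k} → ℝ =>
        ∑ i, |x i - x₀ i| * v (Pi.single i 1)) :=
      continuous_finset_sum _ fun i _ =>
        (((continuous_apply i).sub continuous_const).abs.mul continuous_const)
    have := hgc.tendsto x₀
    simpa using this
  -- norm equivalence constant
  obtain ⟨m, hm, hmv⟩ : ∃ m : ℝ, 0 < m ∧ ∀ x : {s : Finset (Fin n) // s.card = k} → ℝ,
      m * ‖x‖ ≤ v x := by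
    have hz : (Pi.single i₀ (1:ℝ) : {s : Finset (Fin n) // s.card = k} → ℝ) ≠ 0 := by
      intro h
      have := congrFun h i₀
      simp at this
    have hsne : (Metric.sphere (0 : {s : Finset (Fin n) // s.card = k} → ℝ) 1).Nonempty := by
      refine ⟨‖(Pi.single i₀ (1:ℝ) : {s : Finset (Fin n) // s.card = k} → ℝ)‖⁻¹ •
        (Pi.single i₀ (1:ℝ) : {s : Finset (Fin n) // s.card = k} → ℝ), ?_⟩
      rw [mem_sphere_zero_iff_norm, norm_smul, norm_inv, norm_norm]
      exact inv_mul_cancel₀ (norm_ne_zero_iff.2 hz)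
    obtain ⟨xm, hxmS, hxmmin⟩ := (isCompact_sphere
      (0 : {s : Finset (Fin n) // s.card = k} → ℝ) 1).exists_isMinOn hsne hvcont.continuousOn
    have hxm1 : ‖xm‖ = 1 := mem_sphere_zero_iff_norm.1 hxmS
    have hxm0 : xm ≠ 0 := by
      intro h
      rw [h, norm_zero] at hxm1
      norm_num at hxm1
    refine ⟨v xm, lt_of_le_of_ne (hv0 xm) (fun h => hxm0 ((hveq xm).1 h.symm)), ?_⟩
    intro x
    rcases eq_or_ne x 0 with rfl | hx0
    · simp [hv00]
    · have hnx : ‖x‖ ≠ 0 := norm_ne_zero_iff.2 hx0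
      have hpos : 0 < ‖x‖ := lt_of_le_of_ne (norm_nonneg x) (Ne.symm hnx)
      have hmem : ‖x‖⁻¹ • x ∈ Metric.sphere (0 : {s : Finset (Fin n) // s.card = k} → ℝ) 1 := by
        rw [mem_sphere_zero_iff_norm, norm_smul, norm_inv, norm_norm]
        exact inv_mul_cancel₀ hnx
      have h : v xm ≤ v (‖x‖⁻¹ • x) := hxmmin hmem
      rw [hvsmul, abs_of_nonneg (inv_nonneg.2 (norm_nonneg x))] at h
      calc v xm * ‖x‖ ≤ (‖x‖⁻¹ * v x) * ‖x‖ := mul_le_mul_of_nonneg_right h hpos.le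
      _ = v x := by field_simp
  have habs : ∀ (x : {s : Finset (Fin n) // s.card = k} → ℝ) i, |x i| ≤ m⁻¹ * v x := by
    intro x i
    have h1 : |x i| ≤ ‖x‖ := by
      simpa [Real.norm_eq_abs] using norm_le_pi_norm x i
    have h2 : ‖x‖ ≤ m⁻¹ * v x := by
      have h := hmv x
      have : ‖x‖ = m⁻¹ * (m * ‖x‖) := by field_simp
      rw [this]
      exact mul_le_mul_of_nonneg_left h (inv_nonneg.2 hm.le)
    linarith
  have hx₁ : ∃ x : {s : Finset (Fin n) // s.card = k} → ℝ, v x = 1 := by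
    have hz : (Pi.single i₀ (1:ℝ) : {s : Finset (Fin n) // s.card = k} → ℝ) ≠ 0 := by
      intro h
      have := congrFun h i₀
      simp at this
    have hvz : 0 < v (Pi.single i₀ 1) :=
      lt_of_le_of_ne (hv0 _) fun h => hz ((hveq _).1 h.symm)
    refine ⟨(v (Pi.single i₀ 1))⁻¹ • (Pi.single i₀ (1:ℝ) : {s : Finset (Fin n) // s.card = k} → ℝ), ?_⟩
    rw [hvsmul, abs_of_nonneg (inv_nonneg.2 hvz.le)]
    exact inv_mul_cancel₀ hvz.ne'
  set c : {s : Finset (Fin n) // s.card = k} → ℝ := fun i => v (Pi.single i 1) with hcdef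
  have hvmulVec : ∀ (B : Matrix {s : Finset (Fin n) // s.card = k}
      {s : Finset (Fin n) // s.card = k} ℝ) x, v x = 1 →
      v (B.mulVec x) ≤ ∑ i, (∑ j, |B i j|) * (m⁻¹ * c i) := by
    intro B x hx
    calc v (B.mulVec x) ≤ ∑ i, |B.mulVec x i| * c i := hvsum _
    _ ≤ ∑ i, (∑ j, |B i j|) * (m⁻¹ * c i) := by
        apply Finset.sum_le_sum
        intro i _
        have h1 : |B.mulVec x i| ≤ ∑ j, |B i j| * m⁻¹ := by
          calc |B.mulVec x i| ≤ ∑ j, |B i j * x j| := by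
                rw [Matrix.mulVec, dotProduct]
                exact Finset.abs_sum_le_sum_abs _ _
          _ = ∑ j, |B i j| * |x j| := by simp_rw [abs_mul]
          _ ≤ ∑ j, |B i j| * m⁻¹ := Finset.sum_le_sum fun j _ =>
                mul_le_mul_of_nonneg_left (by simpa [hx] using habs x j) (abs_nonneg _)
        calc |B.mulVec x i| * c i ≤ (∑ j, |B i j| * m⁻¹) * c i :=
              mul_le_mul_of_nonneg_right h1 (hv0 _)
        _ = (∑ j, |B i j|) * (m⁻¹ * c i) := by rw [← Finset.sum_mul]; ring
  have hBdd : ∀ B : Matrix {s : Finset (Fin n) // s.card = k}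
      {s : Finset (Fin n) // s.card = k} ℝ,
      BddAbove ((fun x => v (B.mulVec x)) '' {x | v x = 1}) := by
    intro B
    refine ⟨∑ i, (∑ j, |B i j|) * (m⁻¹ * c i), ?_⟩
    rintro r ⟨x, hx, rfl⟩
    exact hvmulVec B x hx
  have hNle : ∀ (B : Matrix {s : Finset (Fin n) // s.card = k}
      {s : Finset (Fin n) // s.card = k} ℝ) (r : ℝ),
      (∀ x, v x = 1 → v (B.mulVec x) ≤ r) → N B ≤ r := by
    intro B r h
    rw [hN]
    apply csSup_le
    · obtain ⟨x, hx⟩ := hx₁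
      exact ⟨_, ⟨x, hx, rfl⟩⟩
    · rintro r' ⟨x, hx, rfl⟩
      exact h x hx
  have hleN : ∀ (B : Matrix {s : Finset (Fin n) // s.card = k}
      {s : Finset (Fin n) // s.card = k} ℝ) x, v x = 1 → v (B.mulVec x) ≤ N B := by
    intro B x hx
    rw [hN]
    exact le_csSup (hBdd B) ⟨x, hx, rfl⟩
  have hNmulVec : ∀ (B : Matrix {s : Finset (Fin n) // s.card = k}
      {s : Finset (Fin n) // s.card = k} ℝ) x, v (B.mulVec x) ≤ N B * v x := by
    intro B x
    rcases eq_or_ne x 0 with rfl | hx0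
    · simp [Matrix.mulVec_zero, hv00]
    · have hvx : 0 < v x := lt_of_le_of_ne (hv0 x) fun h => hx0 ((hveq x).1 h.symm)
      have hy : v ((v x)⁻¹ • x) = 1 := by
        rw [hvsmul, abs_of_nonneg (inv_nonneg.2 hvx.le)]
        exact inv_mul_cancel₀ hvx.ne'
      have h1 := hleN B _ hy
      rw [Matrix.mulVec_smul, hvsmul, abs_of_nonneg (inv_nonneg.2 hvx.le)] at h1
      calc v (B.mulVec x) = v x * ((v x)⁻¹ * v (B.mulVec x)) := by field_simp
      _ ≤ v x * N B := mul_le_mul_of_nonneg_left h1 hvx.le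
      _ = N B * v x := mul_comm _ _
  have hN0 : ∀ B : Matrix {s : Finset (Fin n) // s.card = k}
      {s : Finset (Fin n) // s.card = k} ℝ, 0 ≤ N B := by
    intro B
    rw [hN]
    apply Real.sSup_nonneg
    rintro r ⟨x, hx, rfl⟩
    exact hv0 _
  have hNone : N 1 = 1 := by
    apply le_antisymm
    · exact hNle 1 1 fun x hx => by rw [Matrix.one_mulVec]; exact hx.le
    · obtain ⟨x, hx⟩ := hx₁
      have h := hleN 1 x hx
      rwa [Matrix.one_mulVec, hx] at h
  have hNsum : ∀ B : Matrix {s : Finset (Fin n) // s.card = k}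
      {s : Finset (Fin n) // s.card = k} ℝ, N B ≤ ∑ i, (∑ j, |B i j|) * (m⁻¹ * c i) :=
    fun B => hNle B _ (hvmulVec B)
  set Ψ : ℝ → Matrix {s : Finset (Fin n) // s.card = k}
      {s : Finset (Fin n) // s.card = k} ℝ := fun s => mulCompound (Φ s) k with hΨdef
  set f : ℝ → ℝ := fun s => N (Ψ s) with hfdef
  have hΨd : ∀ t, 0 ≤ t → ∀ α β, HasDerivAt (fun s => Ψ s α β)
      ((addCompound (A t) k * Ψ t) α β) t := by
    intro t ht α β
    exact key_deriv t (A t) (Φ t) Φ (hΦ t ht) rfl α β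
  have hNdiff : ∀ X Y : Matrix {s : Finset (Fin n) // s.card = k}
      {s : Finset (Fin n) // s.card = k} ℝ,
      |N X - N Y| ≤ ∑ i, (∑ j, |X i j - Y i j|) * (m⁻¹ * c i) := by
    intro X Y
    have hsub : ∀ P Q : Matrix {s : Finset (Fin n) // s.card = k}
        {s : Finset (Fin n) // s.card = k} ℝ,
        N P - N Q ≤ ∑ i, (∑ j, |P i j - Q i j|) * (m⁻¹ * c i) := by
      intro P Q
      have h1 : N P ≤ N Q + N (P - Q) := by
        apply hNle
        intro x hx
        have hPQ : P.mulVec x = Q.mulVec x + (P - Q).mulVec x := by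
          rw [← Matrix.add_mulVec, add_sub_cancel]
        rw [hPQ]
        exact le_trans (hvadd _ _) (add_le_add (hleN Q x hx) (hleN (P - Q) x hx))
      have h2 := hNsum (P - Q)
      simp only [Matrix.sub_apply] at h2
      linarith
    have h3 := hsub X Y
    have h4 := hsub Y X
    have h5 : ∑ i, (∑ j, |Y i j - X i j|) * (m⁻¹ * c i)
        = ∑ i, (∑ j, |X i j - Y i j|) * (m⁻¹ * c i) := by
      refine Finset.sum_congr rfl fun i _ => ?_
      congr 1
      exact Finset.sum_congr rfl fun j _ => abs_sub_comm _ _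
    rw [h5] at h4
    rw [abs_sub_le_iff]
    exact ⟨h3, h4⟩
  intro T hT
  have key : ∀ x ∈ Set.Icc (0:ℝ) T, f x ≤ gronwallBound 1 (-η) 0 (x - 0) := by
    apply le_gronwallBound_of_liminf_deriv_right_le (f' := fun s => -η * f s)
    · -- continuity
      intro s hs
      have hs0 : 0 ≤ s := hs.1
      show Filter.Tendsto f (nhdsWithin s (Set.Icc 0 T)) (nhds (f s))
      rw [tendsto_iff_dist_tendsto_zero]
      have hbnd : ∀ z, dist (f z) (f s) ≤ ∑ α, (∑ β, |Ψ z α β - Ψ s α β|) * (m⁻¹ * c α) := by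
        intro z
        rw [Real.dist_eq]
        exact hNdiff (Ψ z) (Ψ s)
      apply squeeze_zero (fun _ => dist_nonneg) hbnd
      have htend : Tendsto (fun z => ∑ α, (∑ β, |Ψ z α β - Ψ s α β|) * (m⁻¹ * c α))
          (nhdsWithin s (Set.Icc 0 T))
          (nhds (∑ α : {s : Finset (Fin n) // s.card = k},
            (∑ β : {s : Finset (Fin n) // s.card = k}, |Ψ s α β - Ψ s α β|) * (m⁻¹ * c α))) := by
        apply tendsto_finset_sum
        intro α _
        apply Tendsto.mul_const
        apply tendsto_finset_sum
        intro β _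
        have hct : ContinuousAt (fun z => Ψ z α β) s := (hΨd s hs0 α β).continuousAt
        exact ((hct.continuousWithinAt.sub continuousWithinAt_const).abs :
          ContinuousWithinAt (fun z => |Ψ z α β - Ψ s α β|) (Set.Icc 0 T) s)
      simpa using htend
    · -- slope condition
      intro x hx r hr
      have hx0 : 0 ≤ x := hx.1
      set C := addCompound (A x) k with hCdef
      set φ : ℝ → ℝ := fun z => ((N (1 + (z - x) • C) - 1) / (z - x)) * f x
        + ∑ α, (∑ β, |(Ψ z α β - Ψ x α β) / (z - x) - (C * Ψ x) α β|) * (m⁻¹ * c α) with hφdef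
      have hsl : Tendsto φ (nhdsWithin x (Set.Ioi x))
          (nhds (μ C * f x + ∑ α : {s : Finset (Fin n) // s.card = k},
            (∑ β : {s : Finset (Fin n) // s.card = k}, |(0:ℝ)|) * (m⁻¹ * c α))) := by
        apply Tendsto.add
        · apply Tendsto.mul_const
          have hshift : Tendsto (fun z => z - x) (nhdsWithin x (Set.Ioi x))
              (nhdsWithin 0 (Set.Ioi 0)) := by
            apply tendsto_nhdsWithin_of_tendsto_nhds_of_eventually_within
            · have h : Tendsto (fun z : ℝ => z - x) (nhds x) (nhds (x - x)) :=
                ((continuous_id.sub continuous_const).tendsto x)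
              rw [sub_self] at h
              exact h.mono_left nhdsWithin_le_nhds
            · exact eventually_mem_nhdsWithin.mono fun z hz => Set.mem_Ioi.2 (sub_pos.2 hz)
          exact (hμ C).comp hshift
        · apply tendsto_finset_sum
          intro α _
          apply Tendsto.mul_const
          apply tendsto_finset_sum
          intro β _
          have hslope := hΨd x hx0 α β
          rw [hasDerivAt_iff_tendsto_slope] at hslope
          have hslope' : Tendsto (slope (fun s => Ψ s α β) x) (nhdsWithin x (Set.Ioi x))
              (nhds ((C * Ψ x) α β)) :=
            hslope.mono_left (nhdsWithin_mono x fun z hz => ne_of_gt hz)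
          have h1 : Tendsto (fun z => (Ψ z α β - Ψ x α β) / (z - x) - (C * Ψ x) α β)
              (nhdsWithin x (Set.Ioi x)) (nhds 0) := by
            have h2 := hslope'.sub_const ((C * Ψ x) α β)
            rw [sub_self] at h2
            refine h2.congr fun z => ?_
            rw [slope_def_field]
          exact h1.abs
      have hL : μ C * f x + ∑ α : {s : Finset (Fin n) // s.card = k},
          (∑ β : {s : Finset (Fin n) // s.card = k}, |(0:ℝ)|) * (m⁻¹ * c α) < r := by
        have h1 : μ C ≤ -η := hcontr x hx0
        have h2 : 0 ≤ f x := hN0 _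
        have h3 : μ C * f x ≤ -η * f x := mul_le_mul_of_nonneg_right h1 h2
        have h4 : ∑ α : {s : Finset (Fin n) // s.card = k},
            (∑ β : {s : Finset (Fin n) // s.card = k}, |(0:ℝ)|) * (m⁻¹ * c α) = 0 := by
          simp
        rw [h4, add_zero]
        calc μ C * f x ≤ -η * f x := h3
        _ < r := hr
      have hev := hsl.eventually_lt_const hL
      have hin : ∀ᶠ z in nhdsWithin x (Set.Ioi x), (z - x)⁻¹ * (f z - f x) ≤ φ z := by
        filter_upwards [self_mem_nhdsWithin] with z hz
        have hzx : 0 < z - x := sub_pos.2 hz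
        set Rz := Ψ z - (1 + (z - x) • C) * Ψ x with hRzdef
        have hfz : f z ≤ N (1 + (z - x) • C) * f x + ∑ α, (∑ β, |Rz α β|) * (m⁻¹ * c α) := by
          have h1 : N (Ψ z) ≤ N ((1 + (z - x) • C) * Ψ x) + N Rz := by
            apply hNle
            intro y hy
            have hmv2 : (Ψ z).mulVec y = ((1 + (z - x) • C) * Ψ x).mulVec y + Rz.mulVec y := by
              rw [← Matrix.add_mulVec, hRzdef, add_sub_cancel]
            rw [hmv2]
            exact le_trans (hvadd _ _) (add_le_add (hleN _ y hy) (hleN _ y hy))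
          have h2 : N ((1 + (z - x) • C) * Ψ x) ≤ N (1 + (z - x) • C) * N (Ψ x) := by
            apply hNle
            intro y hy
            rw [← Matrix.mulVec_mulVec]
            calc v ((1 + (z - x) • C).mulVec ((Ψ x).mulVec y))
                ≤ N (1 + (z - x) • C) * v ((Ψ x).mulVec y) := hNmulVec _ _
            _ ≤ N (1 + (z - x) • C) * N (Ψ x) :=
                mul_le_mul_of_nonneg_left (hleN (Ψ x) y hy) (hN0 _)
          have h3 := hNsum Rz
          calc f z = N (Ψ z) := rfl
          _ ≤ N ((1 + (z - x) • C) * Ψ x) + N Rz := h1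
          _ ≤ N (1 + (z - x) • C) * N (Ψ x) + ∑ α, (∑ β, |Rz α β|) * (m⁻¹ * c α) :=
              add_le_add h2 h3
          _ = N (1 + (z - x) • C) * f x + ∑ α, (∑ β, |Rz α β|) * (m⁻¹ * c α) := rfl
        have hfzx : f z - f x ≤ (N (1 + (z - x) • C) - 1) * f x
            + ∑ α, (∑ β, |Rz α β|) * (m⁻¹ * c α) := by
          have hfx : f x = N (Ψ x) := rfl
          nlinarith [hfz]
        have hRentry : ∀ α β, |(Ψ z α β - Ψ x α β) / (z - x) - (C * Ψ x) α β|
            = |Rz α β| / (z - x) := by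
          intro α β
          have hRv : Rz α β = Ψ z α β - Ψ x α β - (z - x) * ((C * Ψ x) α β) := by
            rw [hRzdef]
            simp only [Matrix.sub_apply, Matrix.add_mul, Matrix.smul_mul, Matrix.add_apply,
              Matrix.smul_apply, Matrix.one_mul, smul_eq_mul]
            ring
          have hq : (Ψ z α β - Ψ x α β) / (z - x) - (C * Ψ x) α β
              = (Ψ z α β - Ψ x α β - (z - x) * ((C * Ψ x) α β)) / (z - x) := by
            field_simp
          rw [hq, ← hRv, abs_div, abs_of_pos hzx]
        calc (z - x)⁻¹ * (f z - f x)
            ≤ (z - x)⁻¹ * ((N (1 + (z - x) • C) - 1) * f x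
              + ∑ α, (∑ β, |Rz α β|) * (m⁻¹ * c α)) :=
              mul_le_mul_of_nonneg_left hfzx (inv_nonneg.2 hzx.le)
        _ = ((N (1 + (z - x) • C) - 1) / (z - x)) * f x
              + ∑ α, (∑ β, |Rz α β| / (z - x)) * (m⁻¹ * c α) := by
            rw [mul_add]
            congr 1
            · ring
            · rw [Finset.mul_sum]
              refine Finset.sum_congr rfl fun α _ => ?_
              rw [← Finset.sum_div]
              ring
        _ = φ z := by
            rw [hφdef]
            congr 1
            refine Finset.sum_congr rfl fun α _ => ?_
            congr 1
            exact Finset.sum_congr rfl fun β _ => (hRentry α β).symm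
      have hfreq : ∀ᶠ z in nhdsWithin x (Set.Ioi x), (z - x)⁻¹ * (f z - f x) < r := by
        filter_upwards [hin, hev] with z h1 h2
        exact lt_of_le_of_lt h1 h2
      exact hfreq.frequently
    · -- initial value
      show f 0 ≤ 1
      have hΨ0 : Ψ 0 = 1 := by
        show mulCompound (Φ 0) k = 1
        rw [hΦ0, mulCompound_one]
      have : f 0 = N 1 := by rw [hfdef]; simp only; rw [hΨ0]
      rw [this, hNone]
    · -- bound
      intro s hs
      simp
  have hkey := key T ⟨hT, le_refl T⟩
  rwa [gronwallBound_ε0, sub_zero, one_mul] at hkey
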